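/- For x, y ∈ ℕ let r(x,y) be the number of sequences a₁a₂⋯a_x with a₁ = 0 and a_j ∈ {0,1} for 2 ≤ j ≤ x, having exactly y isolated elements, where a_j is called isolated if it differs from every element in a neighboring position (a_j ≠ a_{j−1} whenever j > 1, and a_j ≠ a_{j+1} whenever j < x; in particular, for x = 1 the single element is isolated). Then for all x, y ∈ ℕ: r(x+2, y+1) − r(x+1, y+1) − r(x+1, y) − r(x, y+1) + r(x, y) = 0. -/

import Mathlib

/-- `a j` is isolated in the sequence `a` if it differs from every element in a
neighboring position. -/
def IsIsolated {x : ℕ} (a : Fin x → Bool) (i : Fin x) : Prop :=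
  ∀ j : Fin x, ((j : ℕ) + 1 = (i : ℕ) ∨ (i : ℕ) + 1 = (j : ℕ)) → a i ≠ a j

/-- `seqCount x y` is the number of sequences `a₁a₂⋯a_x` with `a₁ = 0` and
`a_j ∈ {0,1}`, having exactly `y` isolated elements. -/
noncomputable def seqCount (x y : ℕ) : ℕ :=
  Nat.card {a : Fin x → Bool //
    (∀ i : Fin x, (i : ℕ) = 0 → a i = false) ∧
    Nat.card {i : Fin x // IsIsolated a i} = y}

open Finset

instance {x : ℕ} (a : Fin x → Bool) : DecidablePred (IsIsolated a) := fun i => by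
  unfold IsIsolated; infer_instance

noncomputable def cnt {x : ℕ} (a : Fin x → Bool) : ℕ := Nat.card {i // IsIsolated a i}

lemma cnt_eq_sum {x : ℕ} (a : Fin x → Bool) :
    cnt a = ∑ i : Fin x, if IsIsolated a i then 1 else 0 := by
  rw [cnt, Nat.card_eq_fintype_card, Fintype.card_subtype, Finset.card_filter]

def Pred (x y : ℕ) (a : Fin x → Bool) : Prop :=
  (∀ i : Fin x, (i : ℕ) = 0 → a i = false) ∧ cnt a = y

noncomputable instance {x y : ℕ} : DecidablePred (Pred x y) := fun a => by
  unfold Pred; infer_instance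

lemma seqCount_eq (x y : ℕ) :
    seqCount x y = (univ.filter (Pred x y)).card := by
  rw [seqCount, Nat.card_eq_fintype_card, Fintype.card_subtype]
  rfl

lemma iso_snoc_of_lt {x : ℕ} (a : Fin (x+1) → Bool) (b : Bool) (i : Fin (x+1))
    (h : (i : ℕ) < x) :
    IsIsolated (Fin.snoc a b) i.castSucc ↔ IsIsolated a i := by
  constructor
  · intro H j hj
    have h2 := H j.castSucc (by simpa using hj)
    simpa [Fin.snoc_castSucc] using h2
  · intro H j hj
    simp only [Fin.coe_castSucc] at hj
    have hjv : (j : ℕ) < x + 1 := by omega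
    have hje : j = Fin.castSucc ⟨(j : ℕ), hjv⟩ := by ext; simp
    rw [hje, Fin.snoc_castSucc, Fin.snoc_castSucc]
    exact H ⟨(j : ℕ), hjv⟩ (by simpa using hj)

lemma iso_snoc_mid {x : ℕ} (a : Fin (x+1) → Bool) (b : Bool) :
    IsIsolated (Fin.snoc a b) (Fin.castSucc (Fin.last x)) ↔
      (IsIsolated a (Fin.last x) ∧ a (Fin.last x) ≠ b) := by
  constructor
  · intro H
    constructor
    · intro j hj
      have h2 := H j.castSucc (by simpa using hj)
      simpa [Fin.snoc_castSucc] using h2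
    · have h2 := H (Fin.last (x+1)) (Or.inr (by simp))
      simpa [Fin.snoc_castSucc, Fin.snoc_last] using h2
  · rintro ⟨H, hne⟩ j hj
    simp only [Fin.coe_castSucc, Fin.val_last] at hj
    by_cases hx : (j : ℕ) = x + 1
    · have hje : j = Fin.last (x+1) := Fin.ext (by simpa using hx)
      rw [hje, Fin.snoc_last, Fin.snoc_castSucc]
      exact hne
    · have hjv : (j : ℕ) < x + 1 := by omega
      have hje : j = Fin.castSucc ⟨(j : ℕ), hjv⟩ := by ext; simp
      rw [hje, Fin.snoc_castSucc, Fin.snoc_castSucc]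
      exact H ⟨(j : ℕ), hjv⟩ (by simp; omega)

lemma iso_snoc_last {x : ℕ} (a : Fin (x+1) → Bool) (b : Bool) :
    IsIsolated (Fin.snoc a b) (Fin.last (x+1)) ↔ b ≠ a (Fin.last x) := by
  constructor
  · intro H
    have h2 := H ((Fin.last x).castSucc) (Or.inl (by simp))
    simpa [Fin.snoc_castSucc, Fin.snoc_last] using h2
  · intro h j hj
    simp only [Fin.val_last] at hj
    have hx : (j : ℕ) = x := by have := j.isLt; omega
    have hje : j = Fin.castSucc (Fin.last x) := Fin.ext (by simpa using hx)
    rw [hje, Fin.snoc_last, Fin.snoc_castSucc]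
    exact h

lemma cnt_snoc {x : ℕ} (a : Fin (x+1) → Bool) (b : Bool) :
    cnt (Fin.snoc a b) = (∑ i : Fin x, if IsIsolated a i.castSucc then 1 else 0)
      + (if IsIsolated a (Fin.last x) ∧ a (Fin.last x) ≠ b then 1 else 0)
      + (if b ≠ a (Fin.last x) then 1 else 0) := by
  rw [cnt_eq_sum, Fin.sum_univ_castSucc, Fin.sum_univ_castSucc]
  congr 1
  · congr 1
    · refine Finset.sum_congr rfl fun i _ => ?_
      simp only [iso_snoc_of_lt a b i.castSucc (by simp)]
    · simp only [iso_snoc_mid]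
  · simp only [iso_snoc_last]

lemma cnt_snoc_ne {x : ℕ} (a : Fin (x+1) → Bool) :
    cnt (Fin.snoc a (!(a (Fin.last x)))) = cnt a + 1 := by
  rw [cnt_snoc, cnt_eq_sum, Fin.sum_univ_castSucc]
  have h : a (Fin.last x) ≠ !(a (Fin.last x)) := by simp
  simp [h]

lemma cnt_snoc_eq {x : ℕ} (a : Fin (x+1) → Bool) :
    cnt a = cnt (Fin.snoc a (a (Fin.last x)))
      + (if IsIsolated a (Fin.last x) then 1 else 0) := by
  rw [cnt_snoc, cnt_eq_sum, Fin.sum_univ_castSucc]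
  simp

lemma P0_snoc {x : ℕ} (a : Fin (x+1) → Bool) (b : Bool) :
    (∀ i : Fin (x+2), (i : ℕ) = 0 → (Fin.snoc a b : Fin (x+2) → Bool) i = false) ↔
      (∀ i : Fin (x+1), (i : ℕ) = 0 → a i = false) := by
  constructor
  · intro H i hi
    have h2 := H i.castSucc (by simpa using hi)
    simpa [Fin.snoc_castSucc] using h2
  · intro H i hi
    have hjv : (i : ℕ) < x + 1 := by omega
    have hje : i = Fin.castSucc ⟨(i : ℕ), hjv⟩ := by ext; simp
    rw [hje, Fin.snoc_castSucc]
    exact H _ (by simpa using hi)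

noncomputable def U (x y : ℕ) : ℕ :=
  (univ.filter (fun a : Fin (x+1) → Bool =>
    Pred (x+1) y a ∧ IsIsolated a (Fin.last x))).card

noncomputable def V (x y : ℕ) : ℕ :=
  (univ.filter (fun a : Fin (x+1) → Bool =>
    Pred (x+1) y a ∧ ¬ IsIsolated a (Fin.last x))).card

lemma E3 (x y : ℕ) : seqCount (x+1) y = U x y + V x y := by
  classical
  rw [seqCount_eq, U, V]
  rw [← Finset.filter_filter, ← Finset.filter_filter,
    Finset.card_filter_add_card_filter_not]

lemma bool_eq_not {a b : Bool} (h : a ≠ b) : a = !b := by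
  cases a <;> cases b <;> simp_all

lemma snoc_of_li {x : ℕ} (s : Fin (x+2) → Bool)
    (h : IsIsolated s (Fin.last (x+1))) :
    s = Fin.snoc (Fin.init s) (!(Fin.init s (Fin.last x))) := by
  have hs := Fin.snoc_init_self s
  rw [← hs, iso_snoc_last] at h
  have hb : s (Fin.last (x+1)) = !(Fin.init s (Fin.last x)) := bool_eq_not h
  calc s = Fin.snoc (Fin.init s) (s (Fin.last (x+1))) := hs.symm
    _ = _ := by rw [hb]

lemma snoc_of_nli {x : ℕ} (s : Fin (x+2) → Bool)
    (h : ¬ IsIsolated s (Fin.last (x+1))) :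
    s = Fin.snoc (Fin.init s) (Fin.init s (Fin.last x)) := by
  have hs := Fin.snoc_init_self s
  rw [← hs, iso_snoc_last] at h
  have hb : s (Fin.last (x+1)) = Fin.init s (Fin.last x) := by
    simpa using h
  calc s = Fin.snoc (Fin.init s) (s (Fin.last (x+1))) := hs.symm
    _ = _ := by rw [hb]

lemma E1 (x y : ℕ) : U (x+1) (y+1) = seqCount (x+1) y := by
  rw [seqCount_eq, U]
  symm
  apply Finset.card_nbij' (i := fun a : Fin (x+1) → Bool => Fin.snoc a (!(a (Fin.last x))))
    (j := fun s : Fin (x+2) → Bool => Fin.init s)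
  · intro a ha
    simp only [Finset.mem_coe, Finset.mem_filter, Finset.mem_univ, true_and] at ha ⊢
    simp only [Pred] at ha ⊢
    refine ⟨⟨(P0_snoc a _).mpr ha.1, ?_⟩, ?_⟩
    · rw [cnt_snoc_ne, ha.2]
    · rw [iso_snoc_last]; simp
  · intro s hs
    simp only [Finset.mem_coe, Finset.mem_filter, Finset.mem_univ, true_and] at hs ⊢
    simp only [Pred] at hs ⊢
    obtain ⟨⟨h0, hc⟩, hli⟩ := hs
    have hrepr := snoc_of_li s hli
    constructor
    · intro i hi
      have h2 := h0 i.castSucc (by simpa using hi)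
      rw [hrepr, Fin.snoc_castSucc] at h2
      exact h2
    · rw [hrepr, cnt_snoc_ne] at hc
      omega
  · intro a _
    exact Fin.init_snoc _ _
  · intro s hs
    simp only [Finset.mem_coe, Finset.mem_filter, Finset.mem_univ, true_and] at hs
    exact (snoc_of_li s hs.2).symm

noncomputable def W (x y : ℕ) : ℕ :=
  (univ.filter (fun a : Fin (x+1) → Bool =>
    (∀ i : Fin (x+1), (i : ℕ) = 0 → a i = false) ∧
      cnt a = y + (if IsIsolated a (Fin.last x) then 1 else 0))).card

lemma V_eq_W (x y : ℕ) : V (x+1) y = W x y := by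
  rw [V, W]
  symm
  apply Finset.card_nbij' (i := fun a : Fin (x+1) → Bool => Fin.snoc a (a (Fin.last x)))
    (j := fun s : Fin (x+2) → Bool => Fin.init s)
  · intro a ha
    simp only [Finset.mem_coe, Finset.mem_filter, Finset.mem_univ, true_and] at ha ⊢
    simp only [Pred] at ha ⊢
    refine ⟨⟨(P0_snoc a _).mpr ha.1, ?_⟩, ?_⟩
    · have hc := cnt_snoc_eq a
      omega
    · rw [iso_snoc_last]; simp
  · intro s hs
    simp only [Finset.mem_coe, Finset.mem_filter, Finset.mem_univ, true_and] at hs ⊢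
    simp only [Pred] at hs ⊢
    obtain ⟨⟨h0, hc⟩, hli⟩ := hs
    have hrepr := snoc_of_nli s hli
    constructor
    · intro i hi
      have h2 := h0 i.castSucc (by simpa using hi)
      rw [hrepr, Fin.snoc_castSucc] at h2
      exact h2
    · have hc2 := cnt_snoc_eq (Fin.init s)
      rw [← hrepr] at hc2
      omega
  · intro a _
    exact Fin.init_snoc _ _
  · intro s hs
    simp only [Finset.mem_coe, Finset.mem_filter, Finset.mem_univ, true_and] at hs
    exact (snoc_of_nli s hs.2).symm

lemma W_split (x y : ℕ) : W x y = U x (y+1) + V x y := by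
  classical
  rw [W, U, V]
  rw [← Finset.card_filter_add_card_filter_not
    (p := fun a : Fin (x+1) → Bool => IsIsolated a (Fin.last x))]
  congr 1
  · rw [Finset.filter_filter]
    refine congrArg Finset.card ?_
    apply Finset.filter_congr
    intro a _
    constructor
    · rintro ⟨⟨h0, hc⟩, hli⟩
      exact ⟨⟨h0, by simp [hli] at hc; omega⟩, hli⟩
    · rintro ⟨⟨h0, hc⟩, hli⟩
      exact ⟨⟨h0, by simp [hli]; omega⟩, hli⟩
  · rw [Finset.filter_filter]
    refine congrArg Finset.card ?_
    apply Finset.filter_congr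
    intro a _
    constructor
    · rintro ⟨⟨h0, hc⟩, hli⟩
      exact ⟨⟨h0, by simp [hli] at hc; omega⟩, hli⟩
    · rintro ⟨⟨h0, hc⟩, hli⟩
      exact ⟨⟨h0, by simp [hli]; omega⟩, hli⟩

lemma E2 (x y : ℕ) : V (x+1) y = U x (y+1) + V x y := by
  rw [V_eq_W, W_split]

lemma iso_fin_one (a : Fin 1 → Bool) (i : Fin 1) : IsIsolated a i := by
  intro j hj
  have hi : (i : ℕ) = 0 := by omega
  have hjv : (j : ℕ) = 0 := by omega
  omega

lemma V_zero (y : ℕ) : V 0 y = 0 := by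
  rw [V, Finset.card_eq_zero, Finset.filter_eq_empty_iff]
  intro a _
  rintro ⟨-, hli⟩
  exact hli (iso_fin_one a _)

lemma cnt_fin_zero (a : Fin 0 → Bool) : cnt a = 0 := by
  rw [cnt]
  exact Nat.card_of_isEmpty

lemma cnt_fin_one (a : Fin 1 → Bool) : cnt a = 1 := by
  rw [cnt_eq_sum]
  simp [iso_fin_one]

lemma seq0 (y : ℕ) : seqCount 0 y = if y = 0 then 1 else 0 := by
  rw [seqCount_eq]
  have h : ∀ a : Fin 0 → Bool, Pred 0 y a ↔ y = 0 := by
    intro a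
    unfold Pred
    simp [cnt_fin_zero a]
    exact comm
  rw [Finset.filter_congr (fun a _ => h a)]
  by_cases hy : y = 0
  · simp [hy]
  · simp [hy]

lemma seq1 (y : ℕ) : seqCount 1 y = if y = 1 then 1 else 0 := by
  rw [seqCount_eq]
  have h : ∀ a : Fin 1 → Bool, Pred 1 y a ↔ ((a = fun _ => false) ∧ y = 1) := by
    intro a
    unfold Pred
    rw [cnt_fin_one a]
    constructor
    · rintro ⟨h0, h1⟩
      refine ⟨funext fun i => ?_, h1.symm⟩
      exact h0 i (by omega)
    · rintro ⟨h0, h1⟩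
      subst h0
      exact ⟨fun _ _ => rfl, h1.symm⟩
  rw [Finset.filter_congr (fun a _ => h a)]
  by_cases hy : y = 1
  · simp [hy, Finset.filter_eq']
  · simp [hy]

lemma seq0_0 : seqCount 0 0 = 1 := by rw [seq0]; rfl
lemma seq0_s (y : ℕ) : seqCount 0 (y+1) = 0 := by rw [seq0, if_neg (by omega)]
lemma seq1_0 : seqCount 1 0 = 0 := by rw [seq1, if_neg (by omega)]
lemma seq1_1 : seqCount 1 1 = 1 := by rw [seq1]; rfl
lemma seq1_s (y : ℕ) : seqCount 1 (y+2) = 0 := by rw [seq1, if_neg (by omega)]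

lemma main_nat (x y : ℕ) :
    seqCount (x+2) (y+1) + seqCount x y
      = seqCount (x+1) (y+1) + seqCount (x+1) y + seqCount x (y+1) := by
  rcases x with _ | w
  · rcases y with _ | y
    · have h1 : seqCount 2 1 = U 1 1 + V 1 1 := E3 1 1
      have h2 : U 1 1 = seqCount 1 0 := E1 0 0
      have h3 : V 1 1 = U 0 2 + V 0 1 := E2 0 1
      have h4 : seqCount 1 2 = U 0 2 + V 0 2 := E3 0 2
      have h5 : V 0 2 = 0 := V_zero 2
      have h6 : V 0 1 = 0 := V_zero 1
      have v1 := seq0_0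
      have v2 : seqCount 0 1 = 0 := seq0_s 0
      have v3 := seq1_0
      have v4 := seq1_1
      have v5 : seqCount 1 2 = 0 := seq1_s 0
      show seqCount 2 1 + seqCount 0 0 = seqCount 1 1 + seqCount 1 0 + seqCount 0 1
      omega
    · have h1 : seqCount 2 (y+2) = U 1 (y+2) + V 1 (y+2) := E3 1 (y+2)
      have h2 : U 1 (y+2) = seqCount 1 (y+1) := E1 0 (y+1)
      have h3 : V 1 (y+2) = U 0 (y+3) + V 0 (y+2) := E2 0 (y+2)
      have h4 : seqCount 1 (y+3) = U 0 (y+3) + V 0 (y+3) := E3 0 (y+3)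
      have h5 : V 0 (y+3) = 0 := V_zero (y+3)
      have h6 : V 0 (y+2) = 0 := V_zero (y+2)
      have v1 : seqCount 0 (y+1) = 0 := seq0_s y
      have v2 : seqCount 0 (y+2) = 0 := seq0_s (y+1)
      have v3 : seqCount 1 (y+2) = 0 := seq1_s y
      have v4 : seqCount 1 (y+3) = 0 := seq1_s (y+1)
      show seqCount 2 (y+2) + seqCount 0 (y+1)
        = seqCount 1 (y+2) + seqCount 1 (y+1) + seqCount 0 (y+2)
      omega
  · have h1 : seqCount (w+3) (y+1) = U (w+2) (y+1) + V (w+2) (y+1) := E3 (w+2) (y+1)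
    have h2 : U (w+2) (y+1) = seqCount (w+2) y := E1 (w+1) y
    have h3 : V (w+2) (y+1) = U (w+1) (y+2) + V (w+1) (y+1) := E2 (w+1) (y+1)
    have h4 : U (w+1) (y+2) = seqCount (w+1) (y+1) := E1 w (y+1)
    have h5 : seqCount (w+2) (y+1) = U (w+1) (y+1) + V (w+1) (y+1) := E3 (w+1) (y+1)
    have h6 : U (w+1) (y+1) = seqCount (w+1) y := E1 w y
    show seqCount (w+3) (y+1) + seqCount (w+1) y
      = seqCount (w+2) (y+1) + seqCount (w+2) y + seqCount (w+1) (y+1)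
    omega


/-- The counting function `r(x,y)` of binary sequences starting with `0` with exactly
`y` isolated elements satisfies the difference equation
`r(x+2,y+1) − r(x+1,y+1) − r(x+1,y) − r(x,y+1) + r(x,y) = 0`. -/
theorem isolated_count_difference_equation :
    ∀ x y : ℕ,
      (seqCount (x + 2) (y + 1) : ℤ) - seqCount (x + 1) (y + 1) - seqCount (x + 1) y
        - seqCount x (y + 1) + seqCount x y = 0 := by
  intro x y
  have h := main_nat x y
  omega
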